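/- With Ω₀ as above, if (x₀ - s⁻, y₀ + s⁺) ∈ Ω₀ with witnessing intensity vector μ (μ ≥ 0, 1ᵀμ = 1, Xμ + s⁻ ≤ x₀, Yμ - s⁺ ≥ y₀), then defining σ = max{1, max_i{1/s⁻_i : s⁻_i > 0}, max_r{1/s⁺_r : s⁺_r > 0}}, δ = σμ, and t⁻_i = 1 if s⁻_i > 0 else 0, t⁺_r = 1 if s⁺_r > 0 else 0, the triple (δ, t⁻, t⁺) satisfies δ ≥ 0, 1ᵀδ ≥ 1, Xδ + t⁻ ≤ (1ᵀδ)x₀, Yδ - t⁺ ≥ (1ᵀδ)y₀, 0 ≤ t⁻ ≤ 1, 0 ≤ t⁺ ≤ 1; furthermore 1ᵀt⁻ equals the number of positive components of s⁻ and 1ᵀt⁺ equals the number of positive components of s⁺. -/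

import Mathlib

/-- Proposition 3.2: every element of `Ω₀` yields a feasible solution of
system (14) whose objective records the numbers of positive slacks. -/
theorem stmt_5 {m s k : ℕ} (X : Matrix (Fin m) (Fin k) ℝ) (Y : Matrix (Fin s) (Fin k) ℝ)
    (x₀ : Fin m → ℝ) (y₀ : Fin s → ℝ)
    (μ : Fin k → ℝ) (sm : Fin m → ℝ) (sp : Fin s → ℝ)
    (hμ : 0 ≤ μ) (hμ1 : ∑ j, μ j = 1) (hsm : 0 ≤ sm) (hsp : 0 ≤ sp)
    (hin : X.mulVec μ + sm ≤ x₀) (hout : y₀ ≤ Y.mulVec μ - sp) :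
    let σ := max (Finset.univ.fold max 1 fun i => if 0 < sm i then (sm i)⁻¹ else 1)
                 (Finset.univ.fold max 1 fun r => if 0 < sp r then (sp r)⁻¹ else 1)
    let δ := σ • μ
    let tm : Fin m → ℝ := fun i => if 0 < sm i then 1 else 0
    let tp : Fin s → ℝ := fun r => if 0 < sp r then 1 else 0
    0 ≤ δ ∧ 1 ≤ ∑ j, δ j ∧
      X.mulVec δ + tm ≤ (∑ j, δ j) • x₀ ∧ (∑ j, δ j) • y₀ ≤ Y.mulVec δ - tp ∧
      0 ≤ tm ∧ tm ≤ 1 ∧ 0 ≤ tp ∧ tp ≤ 1 ∧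
      ∑ i, tm i = ((Finset.univ.filter fun i => 0 < sm i).card : ℝ) ∧
      ∑ r, tp r = ((Finset.univ.filter fun r => 0 < sp r).card : ℝ) := by
  intro σ δ tm tp
  have hσ1 : (1:ℝ) ≤ σ := by
    refine le_max_of_le_left ?_
    rw [Finset.le_fold_max]; exact Or.inl le_rfl
  have hσ0 : (0:ℝ) ≤ σ := le_trans zero_le_one hσ1
  have hσsm : ∀ i, (if 0 < sm i then 1 else 0 : ℝ) ≤ σ * sm i := by
    intro i
    by_cases h : 0 < sm i
    · simp only [h, if_true]
      have hle : (sm i)⁻¹ ≤ σ := by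
        refine le_max_of_le_left ?_
        rw [Finset.le_fold_max]
        exact Or.inr ⟨i, Finset.mem_univ i, by simp [h]⟩
      calc (1:ℝ) = (sm i)⁻¹ * sm i := by field_simp
        _ ≤ σ * sm i := by apply mul_le_mul_of_nonneg_right hle h.le
    · simp only [h, if_false]
      exact mul_nonneg hσ0 (hsm i)
  have hσsp : ∀ r, (if 0 < sp r then 1 else 0 : ℝ) ≤ σ * sp r := by
    intro r
    by_cases h : 0 < sp r
    · simp only [h, if_true]
      have hle : (sp r)⁻¹ ≤ σ := by
        refine le_max_of_le_right ?_
        rw [Finset.le_fold_max]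
        exact Or.inr ⟨r, Finset.mem_univ r, by simp [h]⟩
      calc (1:ℝ) = (sp r)⁻¹ * sp r := by field_simp
        _ ≤ σ * sp r := by apply mul_le_mul_of_nonneg_right hle h.le
    · simp only [h, if_false]
      exact mul_nonneg hσ0 (hsp r)
  have hsum : ∑ j, δ j = σ := by
    simp only [δ, Pi.smul_apply, smul_eq_mul, ← Finset.mul_sum, hμ1, mul_one]
  have hmul : ∀ A : Matrix (Fin m) (Fin k) ℝ, A.mulVec δ = σ • A.mulVec μ := by
    intro A; simp [δ, Matrix.mulVec_smul]
  refine ⟨?_, ?_, ?_, ?_, ?_, ?_, ?_, ?_, ?_, ?_⟩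
  · intro j; exact mul_nonneg hσ0 (hμ j)
  · rw [hsum]; exact hσ1
  · intro i
    have h1 := hin i
    simp only [Pi.add_apply] at h1 ⊢
    rw [hsum, hmul X]
    simp only [Pi.smul_apply, smul_eq_mul]
    have : σ * (X.mulVec μ i + sm i) ≤ σ * x₀ i :=
      mul_le_mul_of_nonneg_left h1 hσ0
    calc σ * X.mulVec μ i + tm i ≤ σ * X.mulVec μ i + σ * sm i := by
          exact add_le_add_right (hσsm i) _
      _ = σ * (X.mulVec μ i + sm i) := by ring
      _ ≤ σ * x₀ i := this
  · intro r
    have h1 := hout r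
    simp only [Pi.sub_apply] at h1 ⊢
    rw [hsum, Matrix.mulVec_smul]
    simp only [δ, Pi.smul_apply, smul_eq_mul, Matrix.mulVec_smul]
    have : σ * y₀ r ≤ σ * (Y.mulVec μ r - sp r) :=
      mul_le_mul_of_nonneg_left h1 hσ0
    calc σ * y₀ r ≤ σ * (Y.mulVec μ r - sp r) := this
      _ = σ * Y.mulVec μ r - σ * sp r := by ring
      _ ≤ σ * Y.mulVec μ r - tp r := by
          have := hσsp r; simp only [tp]; linarith
  · intro i; simp only [tm]; positivity
  · intro i; simp only [tm, Pi.one_apply]; split <;> norm_num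
  · intro r; simp only [tp]; positivity
  · intro r; simp only [tp, Pi.one_apply]; split <;> norm_num
  · simp [tm, Finset.sum_boole]
  · simp [tp, Finset.sum_boole]
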